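/- If D is a 2-dominating set of a graph G, then S = V(G) \ D is a Z-irredundant set of G; consequently, for a graph of order n, ZIR(G) ≥ n − γ_2(G), where γ_2(G) is the 2-domination number. -/

import Mathlib

/-- A fort of a graph: a nonempty set `F` such that every vertex outside `F`
has zero or at least two neighbors in `F`. -/
def IsFort {V : Type*} (G : SimpleGraph V) (F : Set V) : Prop :=
  F.Nonempty ∧ ∀ v ∉ F, ∀ w ∈ F, G.Adj v w → ∃ w' ∈ F, w' ≠ w ∧ G.Adj v w'

/-- A zero forcing set, characterized as a set intersecting every fort. -/
def IsZFS {V : Type*} (G : SimpleGraph V) (B : Set V) : Prop :=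
  ∀ F : Set V, IsFort G F → (B ∩ F).Nonempty

/-- A Z-irredundant set: every element has a private fort. -/
def IsZIr {V : Type*} (G : SimpleGraph V) (S : Set V) : Prop :=
  ∀ x ∈ S, ∃ F : Set V, IsFort G F ∧ S ∩ F = {x}

/-- A maximal Z-irredundant set. -/
def IsMaxZIr {V : Type*} (G : SimpleGraph V) (S : Set V) : Prop :=
  IsZIr G S ∧ ∀ T : Set V, IsZIr G T → S ⊆ T → S = T

/-- The upper ZIr number: maximum cardinality of a maximal ZIr-set. -/
noncomputable def ZIR {V : Type*} (G : SimpleGraph V) : ℕ :=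
  sSup {n | ∃ S : Set V, IsMaxZIr G S ∧ S.ncard = n}

/-- The lower ZIr number: minimum cardinality of a maximal ZIr-set. -/
noncomputable def zir {V : Type*} (G : SimpleGraph V) : ℕ :=
  sInf {n | ∃ S : Set V, IsMaxZIr G S ∧ S.ncard = n}

/-- A 2-dominating set: every vertex not in `D` has at least two neighbors in `D`. -/
def Is2Dom {V : Type*} (G : SimpleGraph V) (D : Set V) : Prop :=
  ∀ v ∉ D, ∃ u ∈ D, ∃ w ∈ D, u ≠ w ∧ G.Adj v u ∧ G.Adj v w

/-- The 2-domination number. -/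
noncomputable def gamma2 {V : Type*} (G : SimpleGraph V) : ℕ :=
  sInf {n | ∃ D : Set V, Is2Dom G D ∧ D.ncard = n}

lemma compl_two_dom_isZIr {V : Type*} (G : SimpleGraph V) (D : Set V)
    (hD : Is2Dom G D) : IsZIr G Dᶜ := by
  intro x hx
  refine ⟨insert x D, ⟨⟨x, Set.mem_insert _ _⟩, ?_⟩, ?_⟩
  · intro v hv w hw hadj
    have hvD : v ∉ D := fun h => hv (Set.mem_insert_of_mem _ h)
    obtain ⟨u, hu, u', hu', hne, hadju, hadju'⟩ := hD v hvD
    by_cases h : w = u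
    · exact ⟨u', Set.mem_insert_of_mem _ hu', by rw [h]; exact hne.symm, hadju'⟩
    · exact ⟨u, Set.mem_insert_of_mem _ hu, fun e => h e.symm, hadju⟩
  · ext y
    simp only [Set.mem_inter_iff, Set.mem_compl_iff, Set.mem_insert_iff,
      Set.mem_singleton_iff]
    constructor
    · rintro ⟨hy, rfl | hy'⟩
      · rfl
      · exact absurd hy' hy
    · rintro rfl
      exact ⟨hx, Or.inl rfl⟩

theorem compl_two_dom_zir_and_ZIR_ge {V : Type*} [Fintype V]
    (G : SimpleGraph V) (D : Set V) (hD : Is2Dom G D) :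
    IsZIr G Dᶜ ∧ Fintype.card V - gamma2 G ≤ ZIR G := by
  refine ⟨compl_two_dom_isZIr G D hD, ?_⟩
  -- gamma2 is attained
  have hne : (Set.univ : Set V).Nonempty → True := fun _ => trivial
  have hset : {n | ∃ D : Set V, Is2Dom G D ∧ D.ncard = n}.Nonempty :=
    ⟨(Set.univ : Set V).ncard, Set.univ, fun v hv => absurd (Set.mem_univ v) hv, rfl⟩
  obtain ⟨D₀, hD₀, hcard⟩ := Nat.sInf_mem hset
  set S := D₀ᶜ with hSdef
  have hS : IsZIr G S := compl_two_dom_isZIr G D₀ hD₀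
  have hcardS : S.ncard = Fintype.card V - gamma2 G := by
    have h : D₀.ncard + S.ncard = Fintype.card V := by
      rw [hSdef]
      simpa [Nat.card_eq_fintype_card] using Set.ncard_add_ncard_compl D₀
    unfold gamma2
    omega
  -- extend S to a maximal ZIr set
  have hfin : ({T : Set V | IsZIr G T ∧ S ⊆ T}).Finite := Set.toFinite _
  obtain ⟨T, hT, hTmax⟩ := Set.Finite.exists_maximalFor id _ hfin ⟨S, hS, subset_rfl⟩
  have hTmaxZIr : IsMaxZIr G T := by
    refine ⟨hT.1, fun T' hT' hsub => ?_⟩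
    exact le_antisymm hsub (hTmax ⟨hT', hT.2.trans hsub⟩ hsub)
  have hle : S.ncard ≤ T.ncard := Set.ncard_le_ncard hT.2 T.toFinite
  have hmem : T.ncard ∈ {n | ∃ S : Set V, IsMaxZIr G S ∧ S.ncard = n} :=
    ⟨T, hTmaxZIr, rfl⟩
  have hbdd : BddAbove {n | ∃ S : Set V, IsMaxZIr G S ∧ S.ncard = n} := by
    refine ⟨Fintype.card V, fun n hn => ?_⟩
    obtain ⟨U, _, rfl⟩ := hn
    have := Set.ncard_le_ncard (Set.subset_univ U) (Set.toFinite _)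
    simpa [Set.ncard_univ, Nat.card_eq_fintype_card] using this
  calc Fintype.card V - gamma2 G = S.ncard := hcardS.symm
    _ ≤ T.ncard := hle
    _ ≤ ZIR G := le_csSup hbdd hmem
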